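/- Fix κ ≥ 0 and let A ∈ C²(ℝ, M²) be the solution of the initial value problem Ä + κA = Λ(A,Ȧ)·cof A, A(0) = A₀, Ȧ(0) = B₀, with data (A₀,B₀) ∈ D satisfying 2X₁(A₀,B₀) + X₂(A₀,B₀)² − X₃(A₀,B₀)² = 0. If κ = 0, then A(t) = B₀t + A₀ for all t; if κ > 0, then A(t) = cos(√κ t)·A₀ + (1/√κ)sin(√κ t)·B₀ for all t. -/

import Mathlib

open Matrix

noncomputable section

/-- `M²`: the space of 2×2 real matrices. -/
abbrev M2 : Type := Matrix (Fin 2) (Fin 2) ℝ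

/-- Frobenius inner product `⟨A,B⟩ = tr(AᵀB)`. -/
def mip (A B : M2) : ℝ := (Aᵀ * B).trace

/-- Frobenius norm `|A| = ⟨A,A⟩^{1/2}`. -/
def fnorm (A : M2) : ℝ := Real.sqrt (mip A A)

/-- The matrix Z = [[0,−1],[1,0]]. -/
def Zm : M2 := !![0, -1; 1, 0]

/-- The matrix K = [[1,0],[0,−1]]. -/
def Km : M2 := !![1, 0; 0, -1]

/-- The matrix M = [[0,1],[1,0]]. -/
def Mm : M2 := !![0, 1; 1, 0]

/-- Cofactor: cof [[a,b],[c,d]] = [[d,−c],[−b,a]]. -/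
def cofm (A : M2) : M2 := !![A 1 1, -(A 1 0); -(A 0 1), A 0 0]

/-- Membership in SO(2,ℝ). -/
def isSO (U : M2) : Prop := U.det = 1 ∧ U⁻¹ = Uᵀ

/-- The rotation U(θ) = cos θ·I + sin θ·Z. -/
def Um (θ : ℝ) : M2 := Real.cos θ • (1 : M2) + Real.sin θ • Zm

/-- Invariant X₁(A,B) = ½|B|² + (κ/2)|A|². -/
def X1 (κ : ℝ) (A B : M2) : ℝ := (1/2) * mip B B + (κ/2) * mip A A

/-- Invariant X₂(A,B) = ½⟨ZA − AZ, B⟩. -/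
def X2 (A B : M2) : ℝ := (1/2) * mip (Zm * A - A * Zm) B

/-- Invariant X₃(A,B) = ½⟨ZA + AZ, B⟩. -/
def X3 (A B : M2) : ℝ := (1/2) * mip (Zm * A + A * Zm) B

/-- Lagrange multiplier Λ(A,B) = 2(κ − det B)/|A|². -/
def Lam (κ : ℝ) (A B : M2) : ℝ := 2 * (κ - B.det) / (mip A A)


/-! ### Auxiliary lemmas for the proof -/

private lemma mip_expand (A B : M2) :
    mip A B = A 0 0 * B 0 0 + A 0 1 * B 0 1 + A 1 0 * B 1 0 + A 1 1 * B 1 1 := by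
  simp [mip, Matrix.trace, Matrix.mul_apply, Fin.sum_univ_two]
  ring

private lemma sumsq_zero {a b c d : ℝ} (h : a ^ 2 + b ^ 2 + c ^ 2 + d ^ 2 = 0) :
    a = 0 ∧ b = 0 ∧ c = 0 ∧ d = 0 := by
  refine ⟨?_, ?_, ?_, ?_⟩ <;>
  · apply sq_eq_zero_iff.mp
    apply le_antisymm _ (sq_nonneg _)
    nlinarith [sq_nonneg a, sq_nonneg b, sq_nonneg c, sq_nonneg d]

private lemma const_of_hasDerivAt_zero {f : ℝ → ℝ} (hf : ∀ t, HasDerivAt f 0 t) (t : ℝ) :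
    f t = f 0 :=
  is_const_of_deriv_eq_zero (fun x => (hf x).differentiableAt) (fun x => (hf x).deriv) t 0

/-- Key algebraic lemma: on the constraint manifold with vanishing invariant combination,
the determinant of `B` equals `κ`. -/
private lemma alg_detB (κ a b c d e f g h : ℝ)
    (h1 : a * d - b * c = 1)
    (h2 : e * d - f * c - g * b + h * a = 0)
    (h3 : e ^ 2 + f ^ 2 + g ^ 2 + h ^ 2 + κ * (a ^ 2 + b ^ 2 + c ^ 2 + d ^ 2)
        + ((1/2) * ((-b - c) * e + (a - d) * f + (a - d) * g + (b + c) * h)) ^ 2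
        - ((1/2) * ((b - c) * e + (-a - d) * f + (a + d) * g + (b - c) * h)) ^ 2 = 0) :
    e * h - f * g = κ := by
  have key : (e * h - f * g - κ) * (2 + (a - d) ^ 2 + (b + c) ^ 2) = 0 := by
    linear_combination (-1 : ℝ) * h3 + (2 * κ - (e + h) ^ 2 - (g - f) ^ 2) * h1
      + (a * e + b * f + c * g + d * h) * h2
  have hpos : (0 : ℝ) < 2 + (a - d) ^ 2 + (b + c) ^ 2 := by positivity
  have := mul_eq_zero.mp key
  rcases this with h | h
  · linarith
  · exact absurd h (ne_of_gt hpos)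

/-- First-order linear ODE: if `f' = F` and `F' = 0` then `f` is affine. -/
private lemma ode_lin {f F : ℝ → ℝ} (hf : ∀ t, HasDerivAt f (F t) t)
    (hF : ∀ t, HasDerivAt F 0 t) (t : ℝ) : f t = t * F 0 + f 0 := by
  have hFc : ∀ s, F s = F 0 := fun s => const_of_hasDerivAt_zero hF s
  have hg : ∀ s, HasDerivAt (fun τ => f τ - τ * F 0) 0 s := by
    intro s
    have h1 : HasDerivAt (fun τ : ℝ => τ * F 0) (F 0) s := by
      simpa using (hasDerivAt_id s).mul_const (F 0)
    have h2 := (hf s).sub h1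
    exact h2.congr_deriv (by simp [hFc s])
  have h := const_of_hasDerivAt_zero hg t
  linarith [h]

/-- Harmonic oscillator ODE with explicit solution. -/
private lemma ode_osc {κ : ℝ} (hκ : 0 < κ) {f F : ℝ → ℝ}
    (hf : ∀ t, HasDerivAt f (F t) t)
    (hF : ∀ t, HasDerivAt F (-(κ * f t)) t) (t : ℝ) :
    f t = Real.cos (Real.sqrt κ * t) * f 0
      + (Real.sqrt κ)⁻¹ * Real.sin (Real.sqrt κ * t) * F 0 := by
  set k := Real.sqrt κ with hkdef
  have hk0 : 0 < k := Real.sqrt_pos.mpr hκ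
  have hk2 : k * k = κ := Real.mul_self_sqrt hκ.le
  have hcos : ∀ τ : ℝ, HasDerivAt (fun τ : ℝ => Real.cos (k * τ)) (-(k * Real.sin (k * τ))) τ := by
    intro τ
    have h := (Real.hasDerivAt_cos (k * τ)).comp τ ((hasDerivAt_id τ).const_mul k)
    refine h.congr_deriv (Eq.symm ?_)
    simp; ring
  have hsin : ∀ τ : ℝ, HasDerivAt (fun τ : ℝ => Real.sin (k * τ)) (k * Real.cos (k * τ)) τ := by
    intro τ
    have h := (Real.hasDerivAt_sin (k * τ)).comp τ ((hasDerivAt_id τ).const_mul k)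
    refine h.congr_deriv (Eq.symm ?_)
    simp; ring
  -- candidate solution and its derivative
  have hc : ∀ τ : ℝ, HasDerivAt
      (fun τ : ℝ => Real.cos (k * τ) * f 0 + k⁻¹ * Real.sin (k * τ) * F 0)
      (-(k * Real.sin (k * τ)) * f 0 + Real.cos (k * τ) * F 0) τ := by
    intro τ
    have h := ((hcos τ).mul_const (f 0)).add ((((hsin τ).const_mul k⁻¹)).mul_const (F 0))
    refine h.congr_deriv (Eq.symm ?_)
    field_simp
  have hC : ∀ τ : ℝ, HasDerivAt
      (fun τ : ℝ => -(k * Real.sin (k * τ)) * f 0 + Real.cos (k * τ) * F 0)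
      (-(κ * (Real.cos (k * τ) * f 0 + k⁻¹ * Real.sin (k * τ) * F 0))) τ := by
    intro τ
    have h := (((hsin τ).const_mul k).neg.mul_const (f 0)).add ((hcos τ).mul_const (F 0))
    refine h.congr_deriv (Eq.symm ?_)
    have : κ * k⁻¹ = k := by
      rw [← hk2]; field_simp
    rw [← hk2]
    field_simp
    ring
  -- energy of the difference
  have hD : ∀ τ : ℝ, HasDerivAt
      (fun τ : ℝ => f τ - (Real.cos (k * τ) * f 0 + k⁻¹ * Real.sin (k * τ) * F 0))
      (F τ - (-(k * Real.sin (k * τ)) * f 0 + Real.cos (k * τ) * F 0)) τ :=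
    fun τ => (hf τ).sub (hc τ)
  have hG : ∀ τ : ℝ, HasDerivAt
      (fun τ : ℝ => F τ - (-(k * Real.sin (k * τ)) * f 0 + Real.cos (k * τ) * F 0))
      (-(κ * (f τ - (Real.cos (k * τ) * f 0 + k⁻¹ * Real.sin (k * τ) * F 0)))) τ := by
    intro τ
    have h := (hF τ).sub (hC τ)
    refine h.congr_deriv (Eq.symm ?_)
    ring
  have hE : ∀ τ : ℝ, HasDerivAt
      (fun τ : ℝ => (F τ - (-(k * Real.sin (k * τ)) * f 0 + Real.cos (k * τ) * F 0)) ^ 2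
        + κ * (f τ - (Real.cos (k * τ) * f 0 + k⁻¹ * Real.sin (k * τ) * F 0)) ^ 2) 0 τ := by
    intro τ
    have h := ((hG τ).pow 2).add (((hD τ).pow 2).const_mul κ)
    refine h.congr_deriv (Eq.symm ?_)
    ring
  have hEc := const_of_hasDerivAt_zero hE t
  have h0 : ((F 0 - (-(k * Real.sin (k * 0)) * f 0 + Real.cos (k * 0) * F 0)) ^ 2
      + κ * (f 0 - (Real.cos (k * 0) * f 0 + k⁻¹ * Real.sin (k * 0) * F 0)) ^ 2) = 0 := by
    simp
  rw [h0] at hEc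
  have hDt : f t - (Real.cos (k * t) * f 0 + k⁻¹ * Real.sin (k * t) * F 0) = 0 := by
    have hsq : (f t - (Real.cos (k * t) * f 0 + k⁻¹ * Real.sin (k * t) * F 0)) ^ 2 = 0 := by
      have h1 := sq_nonneg (F t - (-(k * Real.sin (k * t)) * f 0 + Real.cos (k * t) * F 0))
      have h2 := sq_nonneg (f t - (Real.cos (k * t) * f 0 + k⁻¹ * Real.sin (k * t) * F 0))
      nlinarith
    exact sq_eq_zero_iff.mp hsq
  linarith [hDt]

set_option maxHeartbeats 2000000 in
/-- The core conservation-law argument, at the level of the four entry functions.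
Conclusion: the Lagrange multiplier vanishes identically. -/
private lemma core (κ : ℝ) (hκ : 0 ≤ κ)
    (p q r s P Q R S L : ℝ → ℝ)
    (hp : ∀ t, HasDerivAt p (P t) t) (hq : ∀ t, HasDerivAt q (Q t) t)
    (hr : ∀ t, HasDerivAt r (R t) t) (hs : ∀ t, HasDerivAt s (S t) t)
    (hP : ∀ t, HasDerivAt P (L t * s t - κ * p t) t)
    (hQ : ∀ t, HasDerivAt Q (-(L t * r t) - κ * q t) t)
    (hR : ∀ t, HasDerivAt R (-(L t * q t) - κ * r t) t)
    (hS : ∀ t, HasDerivAt S (L t * p t - κ * s t) t)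
    (hL : ∀ t, L t = 2 * (κ - (P t * S t - Q t * R t))
        / (p t ^ 2 + q t ^ 2 + r t ^ 2 + s t ^ 2))
    (hdet0 : p 0 * s 0 - q 0 * r 0 = 1)
    (htan0 : P 0 * s 0 - Q 0 * r 0 - R 0 * q 0 + S 0 * p 0 = 0)
    (hX0 : P 0 ^ 2 + Q 0 ^ 2 + R 0 ^ 2 + S 0 ^ 2
        + κ * (p 0 ^ 2 + q 0 ^ 2 + r 0 ^ 2 + s 0 ^ 2)
        + ((1/2) * ((-q 0 - r 0) * P 0 + (p 0 - s 0) * Q 0 + (p 0 - s 0) * R 0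
            + (q 0 + r 0) * S 0)) ^ 2
        - ((1/2) * ((q 0 - r 0) * P 0 + (-p 0 - s 0) * Q 0 + (p 0 + s 0) * R 0
            + (q 0 - r 0) * S 0)) ^ 2 = 0) :
    ∀ t, L t = 0 := by
  -- Energy `E = 2κ u² + v²` is conserved, where `u = det A - 1`, `v = ⟨Ȧ, cof A⟩`.
  have hE : ∀ t, HasDerivAt
      (fun t => 2 * κ * (p t * s t - q t * r t - 1) ^ 2
        + (P t * s t - Q t * r t - R t * q t + S t * p t) ^ 2) 0 t := by
    intro t
    have hch := (((((hp t).mul (hs t)).sub ((hq t).mul (hr t))).sub_const 1).pow 2).const_mul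
        (2 * κ) |>.add
      ((((((hP t).mul (hs t)).sub ((hQ t).mul (hr t))).sub ((hR t).mul (hq t))).add
        ((hS t).mul (hp t))).pow 2)
    refine hch.congr_deriv (Eq.symm ?_)
    simp only [Pi.mul_apply, Pi.sub_apply, Pi.add_apply, Pi.neg_apply]
    by_cases hw : p t ^ 2 + q t ^ 2 + r t ^ 2 + s t ^ 2 = 0
    · obtain ⟨h1, h2, h3, h4⟩ := sumsq_zero hw
      rw [h1, h2, h3, h4]; ring
    · have hLw : L t * (p t ^ 2 + q t ^ 2 + r t ^ 2 + s t ^ 2)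
          = 2 * (κ - (P t * S t - Q t * R t)) := by
        rw [hL t]; field_simp
      linear_combination (-(2 * (P t * s t - Q t * r t - R t * q t + S t * p t))) * hLw
  have hkey : ∀ t, 2 * κ * (p t * s t - q t * r t - 1) ^ 2
      + (P t * s t - Q t * r t - R t * q t + S t * p t) ^ 2 = 0 := by
    intro t
    have h := const_of_hasDerivAt_zero hE t
    rw [hdet0] at h
    rw [htan0] at h
    simpa using h
  have hv0 : ∀ t, P t * s t - Q t * r t - R t * q t + S t * p t = 0 := by
    intro t
    have hsq : (P t * s t - Q t * r t - R t * q t + S t * p t) ^ 2 = 0 := by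
      have h1 := hkey t
      have h2 : 0 ≤ 2 * κ * (p t * s t - q t * r t - 1) ^ 2 := by positivity
      nlinarith [sq_nonneg (P t * s t - Q t * r t - R t * q t + S t * p t)]
    exact sq_eq_zero_iff.mp hsq
  have hu0 : ∀ t, p t * s t - q t * r t = 1 := by
    rcases eq_or_lt_of_le hκ with hk0 | hkpos
    · have hu' : ∀ t, HasDerivAt (fun t => p t * s t - q t * r t - 1) 0 t := by
        intro t
        have h := (((hp t).mul (hs t)).sub ((hq t).mul (hr t))).sub_const 1
        refine h.congr_deriv (Eq.symm ?_)
        have := hv0 t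
        linarith
      intro t
      have h := const_of_hasDerivAt_zero hu' t
      rw [hdet0] at h
      linarith
    · intro t
      have h1 := hkey t
      have hsq : (p t * s t - q t * r t - 1) ^ 2 = 0 := by
        have h2 := sq_nonneg (P t * s t - Q t * r t - R t * q t + S t * p t)
        have h3 := sq_nonneg (p t * s t - q t * r t - 1)
        nlinarith
      have := sq_eq_zero_iff.mp hsq
      linarith
  -- conservation of the invariant combination
  have hI : ∀ t, HasDerivAt
      (fun t => P t ^ 2 + Q t ^ 2 + R t ^ 2 + S t ^ 2
        + κ * (p t ^ 2 + q t ^ 2 + r t ^ 2 + s t ^ 2)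
        + ((1/2) * ((-q t - r t) * P t + (p t - s t) * Q t + (p t - s t) * R t
            + (q t + r t) * S t)) ^ 2
        - ((1/2) * ((q t - r t) * P t + (-p t - s t) * Q t + (p t + s t) * R t
            + (q t - r t) * S t)) ^ 2) 0 t := by
    intro t
    have c1 := ((((hP t).pow 2).add ((hQ t).pow 2)).add ((hR t).pow 2)).add ((hS t).pow 2)
    have c2 := (((((hp t).pow 2).add ((hq t).pow 2)).add ((hr t).pow 2)).add
      ((hs t).pow 2)).const_mul κ
    have c3 := (((((((hq t).neg.sub (hr t)).mul (hP t)).add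
        (((hp t).sub (hs t)).mul (hQ t))).add
        (((hp t).sub (hs t)).mul (hR t))).add
        (((hq t).add (hr t)).mul (hS t))).const_mul (1/2)).pow 2
    have c4 := (((((((hq t).sub (hr t)).mul (hP t)).add
        (((hp t).neg.sub (hs t)).mul (hQ t))).add
        (((hp t).add (hs t)).mul (hR t))).add
        (((hq t).sub (hr t)).mul (hS t))).const_mul (1/2)).pow 2
    have hch := ((c1.add c2).add c3).sub c4
    refine hch.congr_deriv (Eq.symm ?_)
    simp only [Pi.mul_apply, Pi.sub_apply, Pi.add_apply, Pi.neg_apply]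
    linear_combination (-(2 * L t)) * hv0 t
  have hIc : ∀ t, P t ^ 2 + Q t ^ 2 + R t ^ 2 + S t ^ 2
        + κ * (p t ^ 2 + q t ^ 2 + r t ^ 2 + s t ^ 2)
        + ((1/2) * ((-q t - r t) * P t + (p t - s t) * Q t + (p t - s t) * R t
            + (q t + r t) * S t)) ^ 2
        - ((1/2) * ((q t - r t) * P t + (-p t - s t) * Q t + (p t + s t) * R t
            + (q t - r t) * S t)) ^ 2 = 0 := by
    intro t
    have h := const_of_hasDerivAt_zero hI t
    rw [h]
    exact hX0
  have hdB : ∀ t, P t * S t - Q t * R t = κ := by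
    intro t
    exact alg_detB κ (p t) (q t) (r t) (s t) (P t) (Q t) (R t) (S t)
      (hu0 t) (hv0 t) (hIc t)
  intro t
  rw [hL t, hdB t]
  simp

attribute [local instance] Matrix.normedAddCommGroup Matrix.normedSpace

/-- explicit solutions with vanishing pressure. -/
theorem vanishing_pressure (κ : ℝ) (hκ : 0 ≤ κ) (A₀ B₀ : M2)
    (hdet : A₀.det = 1) (htan : mip B₀ (cofm A₀) = 0)
    (hX : 2 * X1 κ A₀ B₀ + X2 A₀ B₀ ^ 2 - X3 A₀ B₀ ^ 2 = 0)
    (A : ℝ → M2) (hA : ContDiff ℝ 2 A)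
    (hA0 : A 0 = A₀) (hB0 : deriv A 0 = B₀)
    (hode : ∀ t : ℝ, deriv (deriv A) t + κ • A t
      = Lam κ (A t) (deriv A t) • cofm (A t)) :
    (κ = 0 → ∀ t : ℝ, A t = t • B₀ + A₀) ∧
    (0 < κ → ∀ t : ℝ, A t = Real.cos (Real.sqrt κ * t) • A₀
        + ((Real.sqrt κ)⁻¹ * Real.sin (Real.sqrt κ * t)) • B₀) := by
  -- differentiability bookkeeping
  have hAdiff : Differentiable ℝ A := hA.differentiable (by norm_num)
  have hA1 : ContDiff ℝ 1 (deriv A) := by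
    have hA' : ContDiff ℝ ((1 : ℕ) + 1) A := by exact_mod_cast hA
    exact (contDiff_succ_iff_deriv.mp hA').2.2
  have hDdiff : Differentiable ℝ (deriv A) := hA1.differentiable one_ne_zero
  have ent1 : ∀ (i j : Fin 2) (t : ℝ), HasDerivAt (fun τ => A τ i j) (deriv A t i j) t := by
    intro i j t
    exact hasDerivAt_pi.mp (hasDerivAt_pi.mp (hAdiff t).hasDerivAt i) j
  have ent2 : ∀ (i j : Fin 2) (t : ℝ),
      HasDerivAt (fun τ => deriv A τ i j) (deriv (deriv A) t i j) t := by
    intro i j t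
    exact hasDerivAt_pi.mp (hasDerivAt_pi.mp (hDdiff t).hasDerivAt i) j
  have hodeE : ∀ (t : ℝ) (i j : Fin 2), deriv (deriv A) t i j
      = Lam κ (A t) (deriv A t) * cofm (A t) i j - κ * A t i j := by
    intro t i j
    have h := congrFun (congrFun (hode t) i) j
    simp only [Matrix.add_apply, Matrix.smul_apply, smul_eq_mul] at h
    linarith
  -- the four second-order scalar ODEs
  have hP : ∀ t : ℝ, HasDerivAt (fun τ => deriv A τ 0 0)
      (Lam κ (A t) (deriv A t) * A t 1 1 - κ * A t 0 0) t := by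
    intro t
    have h := ent2 0 0 t
    rw [hodeE t 0 0] at h
    convert h using 2
    simp [cofm]
  have hQ : ∀ t : ℝ, HasDerivAt (fun τ => deriv A τ 0 1)
      (-(Lam κ (A t) (deriv A t) * A t 1 0) - κ * A t 0 1) t := by
    intro t
    have h := ent2 0 1 t
    rw [hodeE t 0 1] at h
    convert h using 1
    simp [cofm]
  have hR : ∀ t : ℝ, HasDerivAt (fun τ => deriv A τ 1 0)
      (-(Lam κ (A t) (deriv A t) * A t 0 1) - κ * A t 1 0) t := by
    intro t
    have h := ent2 1 0 t
    rw [hodeE t 1 0] at h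
    convert h using 1
    simp [cofm]
  have hS : ∀ t : ℝ, HasDerivAt (fun τ => deriv A τ 1 1)
      (Lam κ (A t) (deriv A t) * A t 0 0 - κ * A t 1 1) t := by
    intro t
    have h := ent2 1 1 t
    rw [hodeE t 1 1] at h
    convert h using 2
    simp [cofm]
  -- the multiplier in entry form
  have hLform : ∀ t : ℝ, Lam κ (A t) (deriv A t)
      = 2 * (κ - (deriv A t 0 0 * deriv A t 1 1 - deriv A t 0 1 * deriv A t 1 0))
        / (A t 0 0 ^ 2 + A t 0 1 ^ 2 + A t 1 0 ^ 2 + A t 1 1 ^ 2) := by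
    intro t
    rw [Lam, Matrix.det_fin_two, mip_expand]
    ring_nf
  -- the data at time `0` in entry form
  have hdet0 : A 0 0 0 * A 0 1 1 - A 0 0 1 * A 0 1 0 = 1 := by
    rw [hA0, ← Matrix.det_fin_two]
    exact hdet
  have htan0 : deriv A 0 0 0 * A 0 1 1 - deriv A 0 0 1 * A 0 1 0
      - deriv A 0 1 0 * A 0 0 1 + deriv A 0 1 1 * A 0 0 0 = 0 := by
    rw [hA0, hB0]
    have h := htan
    rw [mip_expand] at h
    simp [cofm] at h
    linarith
  have hX0 : deriv A 0 0 0 ^ 2 + deriv A 0 0 1 ^ 2 + deriv A 0 1 0 ^ 2 + deriv A 0 1 1 ^ 2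
      + κ * (A 0 0 0 ^ 2 + A 0 0 1 ^ 2 + A 0 1 0 ^ 2 + A 0 1 1 ^ 2)
      + ((1/2) * ((-A 0 0 1 - A 0 1 0) * deriv A 0 0 0 + (A 0 0 0 - A 0 1 1) * deriv A 0 0 1
          + (A 0 0 0 - A 0 1 1) * deriv A 0 1 0 + (A 0 0 1 + A 0 1 0) * deriv A 0 1 1)) ^ 2
      - ((1/2) * ((A 0 0 1 - A 0 1 0) * deriv A 0 0 0 + (-A 0 0 0 - A 0 1 1) * deriv A 0 0 1
          + (A 0 0 0 + A 0 1 1) * deriv A 0 1 0 + (A 0 0 1 - A 0 1 0) * deriv A 0 1 1)) ^ 2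
      = 0 := by
    rw [hA0, hB0]
    have h := hX
    simp only [X1, X2, X3, mip_expand, Matrix.sub_apply, Matrix.add_apply, Matrix.mul_apply,
      Fin.sum_univ_two] at h
    simp [Zm] at h
    linear_combination h
  -- apply the core argument: the multiplier vanishes
  have hL0 : ∀ t : ℝ, Lam κ (A t) (deriv A t) = 0 :=
    core κ hκ (fun τ => A τ 0 0) (fun τ => A τ 0 1) (fun τ => A τ 1 0) (fun τ => A τ 1 1)
      (fun τ => deriv A τ 0 0) (fun τ => deriv A τ 0 1) (fun τ => deriv A τ 1 0)
      (fun τ => deriv A τ 1 1) (fun τ => Lam κ (A τ) (deriv A τ))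
      (ent1 0 0) (ent1 0 1) (ent1 1 0) (ent1 1 1) hP hQ hR hS hLform hdet0 htan0 hX0
  -- hence the equation is linear
  have hsecond : ∀ (i j : Fin 2) (t : ℝ),
      HasDerivAt (fun τ => deriv A τ i j) (-(κ * A t i j)) t := by
    intro i j t
    have h := ent2 i j t
    rw [hodeE t i j, hL0 t] at h
    simpa using h
  constructor
  · -- case κ = 0
    intro hk t
    ext i j
    have h := ode_lin (ent1 i j) (fun τ => by simpa [hk] using hsecond i j τ) t
    rw [hB0, hA0] at h
    simp only [Matrix.add_apply, Matrix.smul_apply, smul_eq_mul]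
    rw [h]
  · -- case κ > 0
    intro hk t
    ext i j
    have h := ode_osc hk (ent1 i j) (hsecond i j) t
    rw [hB0, hA0] at h
    simp only [Matrix.add_apply, Matrix.smul_apply, smul_eq_mul]
    rw [h]
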